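/- Let e_ξ = (Jξ_x, Jξ_y, Jξ_z) ∈ ℝ³ be arbitrary, and define the curvilinear flux F_ξ(Q) and non-conservative term B_ξ(D) from e_ξ as in the split form of the elastic wave equation (F_ξ places E_{e_ξ}·σ in the velocity slots; B_ξ places the e_ξ-symmetrized entries of D in the stress slots). Then for all Q ∈ ℝ⁹ and all D ∈ ℝ⁹: Dᵀ F_ξ(Q) − Qᵀ B_ξ(D) = 0. In particular the anti-symmetric structure of Lemma 2.1 is preserved under any smooth curvilinear coordinate transformation. -/

import Mathlib

open Matrix

/-- Curvilinear flux F_ξ(Q) built from an arbitrary basis vector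
e = (Jξ_x, Jξ_y, Jξ_z), with Q = (v, σ) ordered as
(v_x, v_y, v_z, σ_xx, σ_yy, σ_zz, σ_xy, σ_xz, σ_yz). -/
def curvFlux (e : Fin 3 → ℝ) (Q : Fin 9 → ℝ) : Fin 9 → ℝ :=
  ![e 0 * Q 3 + e 1 * Q 6 + e 2 * Q 7,
    e 0 * Q 6 + e 1 * Q 4 + e 2 * Q 8,
    e 0 * Q 7 + e 1 * Q 8 + e 2 * Q 5,
    0, 0, 0, 0, 0, 0]

/-- Curvilinear non-conservative term B_ξ(D) built from the same e. -/
def curvB (e : Fin 3 → ℝ) (D : Fin 9 → ℝ) : Fin 9 → ℝ :=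
  ![0, 0, 0,
    e 0 * D 0,
    e 1 * D 1,
    e 2 * D 2,
    e 1 * D 0 + e 0 * D 1,
    e 2 * D 0 + e 0 * D 2,
    e 2 * D 1 + e 1 * D 2]

lemma sum_fin9 (f : Fin 9 → ℝ) :
    (∑ i, f i) = f 0 + f 1 + f 2 + f 3 + f 4 + f 5 + f 6 + f 7 + f 8 := by
  rw [show (Finset.univ : Finset (Fin 9)) = {0,1,2,3,4,5,6,7,8} from rfl]
  rw [Finset.sum_insert (by decide), Finset.sum_insert (by decide), Finset.sum_insert (by decide),
      Finset.sum_insert (by decide), Finset.sum_insert (by decide), Finset.sum_insert (by decide),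
      Finset.sum_insert (by decide), Finset.sum_insert (by decide), Finset.sum_singleton]
  ring

/-- The anti-symmetric structure is preserved under any curvilinear
coordinate transformation: for every e_ξ = (Jξ_x, Jξ_y, Jξ_z) and all Q, D,
Dᵀ F_ξ(Q) − Qᵀ B_ξ(D) = 0. -/
theorem curvilinear_antisymmetric (e : Fin 3 → ℝ) :
    ∀ Q D : Fin 9 → ℝ, D ⬝ᵥ curvFlux e Q - Q ⬝ᵥ curvB e D = 0 := by
  intro Q D
  simp only [dotProduct, sum_fin9, curvFlux, curvB]
  norm_num [show ∀ (a : ℝ) (v : Fin 8 → ℝ), Matrix.vecCons a v 5 = v 4 from fun _ _ => rfl,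
    show ∀ (a : ℝ) (v : Fin 8 → ℝ), Matrix.vecCons a v 6 = v 5 from fun _ _ => rfl,
    show ∀ (a : ℝ) (v : Fin 8 → ℝ), Matrix.vecCons a v 7 = v 6 from fun _ _ => rfl,
    show ∀ (a : ℝ) (v : Fin 8 → ℝ), Matrix.vecCons a v 8 = v 7 from fun _ _ => rfl,
    show ∀ (a : ℝ) (v : Fin 5 → ℝ), Matrix.vecCons a v 5 = v 4 from fun _ _ => rfl,
    show ∀ (a : ℝ) (v : Fin 6 → ℝ), Matrix.vecCons a v 5 = v 4 from fun _ _ => rfl,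
    show ∀ (a : ℝ) (v : Fin 6 → ℝ), Matrix.vecCons a v 6 = v 5 from fun _ _ => rfl,
    show ∀ (a : ℝ) (v : Fin 7 → ℝ), Matrix.vecCons a v 5 = v 4 from fun _ _ => rfl,
    show ∀ (a : ℝ) (v : Fin 7 → ℝ), Matrix.vecCons a v 6 = v 5 from fun _ _ => rfl,
    show ∀ (a : ℝ) (v : Fin 7 → ℝ), Matrix.vecCons a v 7 = v 6 from fun _ _ => rfl]
  simp only [Matrix.cons_val]
  ring
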